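/- For every n ≥ 2 and every d ≥ 1, the number f(n, d) of isomorphism classes of simple pedigrees of depth d with constant population size n satisfies 2^d · f(n, d) ≥ (n − 1)^d · n^(d(n−2)). -/

import Mathlib

/-- A simple pedigree of depth `d` with constant population size `n`: the vertex set is
the disjoint union of generations `X_0, …, X_d` (generation `i` being `{i} × Fin n`),
every arc goes from `X_i` to `X_{i-1}`, and there are disjoint sets `M` and `F` covering
the vertex set such that every vertex of `X_i` with `i < d` has exactly two parents,
one in `M` and one in `F` (vertices of `X_d`, the founders, have none by the level
condition). -/
structure SimplePedigree (n d : ℕ) where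
  A : Fin (d + 1) × Fin n → Fin (d + 1) × Fin n → Prop
  arc_level : ∀ u v, A u v → (u.1 : ℕ) = (v.1 : ℕ) + 1
  parents : ∃ M F : Set (Fin (d + 1) × Fin n), Disjoint M F ∧ M ∪ F = Set.univ ∧
    ∀ x : Fin (d + 1) × Fin n, (x.1 : ℕ) < d →
      ∃ u v, u ∈ M ∧ v ∈ F ∧ A u x ∧ A v x ∧ ∀ w, A w x → w = u ∨ w = v

/-- Two simple pedigrees on the same labelled extant set `X_0` are isomorphic if there
is a digraph isomorphism between them fixing each extant vertex. -/
def PedigreeIso {n d : ℕ} (P Q : SimplePedigree n d) : Prop :=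
  ∃ φ : (Fin (d + 1) × Fin n) ≃ (Fin (d + 1) × Fin n),
    (∀ u v, P.A u v ↔ Q.A (φ u) (φ v)) ∧
    ∀ j : Fin n, φ ((0 : Fin (d + 1)), j) = ((0 : Fin (d + 1)), j)


namespace PedAux

variable {n : ℕ}

/-- `x` reaches `y` under iteration of `g`. -/
def Reaches (g : Fin n → Fin n) (x y : Fin n) : Prop := ∃ k, g^[k] x = y

/-- A good level function: it has a 2-cycle `{u,v}` and everything reaches `u`. -/
def IsGood (g : Fin n → Fin n) : Prop :=
  ∃ u, ∃ v, u ≠ v ∧ g u = v ∧ g v = u ∧ ∀ x, Reaches g x u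

lemma orbitUV {g : Fin n → Fin n} {u v : Fin n} (hgu : g u = v) (hgv : g v = u) :
    ∀ k, g^[k] u = u ∨ g^[k] u = v := by
  intro k
  induction k with
  | zero => exact Or.inl rfl
  | succ k ih =>
    rcases ih with h | h
    · rw [Function.iterate_succ_apply', h, hgu]; exact Or.inr rfl
    · rw [Function.iterate_succ_apply', h, hgv]; exact Or.inl rfl

lemma iterate_mul_self {g : Fin n → Fin n} {x : Fin n} {p : ℕ} (hx : g^[p] x = x) :
    ∀ N, g^[p * N] x = x := by
  intro N
  induction N with
  | zero => simp
  | succ N ih =>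
    have : p * (N + 1) = p * N + p := by ring
    rw [this, Function.iterate_add_apply, hx, ih]

lemma periodic_mem {g : Fin n → Fin n} {u v : Fin n} (hgu : g u = v) (hgv : g v = u)
    (hreach : ∀ x, Reaches g x u) :
    ∀ x p, 1 ≤ p → g^[p] x = x → x = u ∨ x = v := by
  intro x p hp hx
  obtain ⟨a, ha⟩ := hreach x
  have hmul : g^[p * a] x = x := iterate_mul_self hx a
  have hle : a ≤ p * a := Nat.le_mul_of_pos_left a hp
  have : g^[p * a - a] u = x := by
    rw [← ha, ← Function.iterate_add_apply, Nat.sub_add_cancel hle, hmul]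
  rcases orbitUV hgu hgv (p * a - a) with h | h
  · left; rw [← this, h]
  · right; rw [← this, h]

lemma good_fpf {g : Fin n → Fin n} {u v : Fin n} (huv : u ≠ v) (hgu : g u = v) (hgv : g v = u)
    (hreach : ∀ x, Reaches g x u) : ∀ m, g m ≠ m := by
  intro m hm
  rcases periodic_mem hgu hgv hreach m 1 le_rfl (by simpa using hm) with h | h
  · subst h; rw [hgu] at hm; exact huv hm.symm
  · subst h; rw [hgv] at hm; exact huv hm

/-- The twist of a good function along its 2-cycle. -/
def twistF (u v : Fin n) (g : Fin n → Fin n) : Fin n → Fin n :=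
  fun m => if m = u ∨ m = v then g m else Equiv.swap u v (g m)

/-- The rigidity lemma. -/
lemma rigid {g g' : Fin n → Fin n} {u v : Fin n} (huv : u ≠ v) (hgu : g u = v) (hgv : g v = u)
    (hreach : ∀ x, Reaches g x u) (ρ : Equiv.Perm (Fin n))
    (Hfor : ∀ m j, (m = j ∨ m = g j) → (ρ m = j ∨ ρ m = g' j)) :
    (ρ = Equiv.refl (Fin n) ∧ g' = g) ∨ (ρ = Equiv.swap u v ∧ g' = twistF u v g) := by
  have fpf : ∀ m, g m ≠ m := good_fpf huv hgu hgv hreach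
  -- matching form
  have match1 : ∀ j, (ρ j = j ∧ ρ (g j) = g' j) ∨ (ρ j ≠ j ∧ ρ j = g' j ∧ ρ (g j) = j) := by
    intro j
    have h1 := Hfor j j (Or.inl rfl)
    have h2 := Hfor (g j) j (Or.inr rfl)
    have hne : ρ (g j) ≠ ρ j := fun h => fpf j (ρ.injective h)
    by_cases hj : ρ j = j
    · left
      refine ⟨hj, ?_⟩
      rcases h2 with h | h
      · exact absurd (h.trans hj.symm) hne
      · exact h
    · right
      rcases h1 with h | h
      · exact absurd h hj
      · refine ⟨hj, h, ?_⟩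
        rcases h2 with h2 | h2
        · exact h2
        · exact absurd (h2.trans h.symm) hne
  have hstep : ∀ j, ρ j ≠ j → ρ (g j) = j ∧ g' j = ρ j := by
    intro j hj
    rcases match1 j with h | h
    · exact absurd h.1 hj
    · exact ⟨h.2.2, h.2.1.symm⟩
  have hinv : ∀ j, ρ j ≠ j → ρ (g j) ≠ g j := by
    intro j hj h
    have h1 := (hstep j hj).1
    exact fpf j (h1 ▸ h).symm  -- g j = j? careful
  by_cases hU : ∀ j, ρ j = j
  · left
    constructor
    · exact Equiv.ext hU
    · funext j
      rcases match1 j with h | h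
      · rw [← h.2, hU]
      · exact absurd (hU j) h.1
  · push_neg at hU
    obtain ⟨j₀, hj₀⟩ := hU
    have hiter : ∀ k, ρ (g^[k] j₀) ≠ g^[k] j₀ := by
      intro k
      induction k with
      | zero => exact hj₀
      | succ k ih => rw [Function.iterate_succ_apply']; exact hinv _ ih
    have hu : ρ u ≠ u := by
      obtain ⟨a, ha⟩ := hreach j₀
      exact ha ▸ hiter a
    have hv : ρ v ≠ v := by
      have := hinv u hu
      rwa [hgu] at this
    have hρv : ρ v = u := by have := (hstep u hu).1; rwa [hgu] at this
    have hρu : ρ u = v := by have := (hstep v hv).1; rwa [hgv] at this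
    -- everything moved is in {u, v}
    have claim' : ∀ k j, ρ j ≠ j → (g^[k] j = u ∨ g^[k] j = v) → (j = u ∨ j = v) := by
      intro k
      induction k with
      | zero => intro j _ h; exact h
      | succ k ih =>
        intro j hj h
        rw [Function.iterate_succ_apply] at h
        have hgj : ρ (g j) ≠ g j := hinv j hj
        rcases ih (g j) hgj h with h1 | h1
        · -- g j = u, so ρ u = j, but ρ u = v
          have := (hstep j hj).1
          rw [h1] at this
          right; rw [← this, hρu]
        · have := (hstep j hj).1
          rw [h1] at this
          left; rw [← this, hρv]
    have hU2 : ∀ j, ρ j ≠ j → j = u ∨ j = v := by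
      intro j hj
      obtain ⟨a, ha⟩ := hreach j
      exact claim' a j hj (Or.inl ha)
    right
    have hρeq : ρ = Equiv.swap u v := by
      apply Equiv.ext
      intro j
      by_cases h1 : j = u
      · subst h1; rw [hρu, Equiv.swap_apply_left]
      · by_cases h2 : j = v
        · subst h2; rw [hρv, Equiv.swap_apply_right]
        · rw [Equiv.swap_apply_of_ne_of_ne h1 h2]
          by_contra h
          rcases hU2 j h with h' | h' <;> [exact h1 h'; exact h2 h']
    refine ⟨hρeq, ?_⟩
    funext j
    by_cases h1 : j = u
    · rw [h1]
      have := (hstep u hu).2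
      rw [this, hρu]; simp [twistF, hgu]
    · by_cases h2 : j = v
      · rw [h2]
        have := (hstep v hv).2
        rw [this, hρv]; simp [twistF, hgv]
      · have hjfix : ρ j = j := by
          by_contra h
          rcases hU2 j h with h' | h' <;> [exact h1 h'; exact h2 h']
        rcases match1 j with h | h
        · rw [← h.2, hρeq]; simp only [twistF]; rw [if_neg (not_or.mpr ⟨h1, h2⟩)]
        · exact absurd hjfix h.1


/-- bundled good functions -/
def GoodFun (n : ℕ) : Type := {g : Fin n → Fin n // IsGood g}

instance : Finite (GoodFun n) := by unfold GoodFun; infer_instance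

noncomputable def gU (g : GoodFun n) : Fin n := g.2.choose
noncomputable def gV (g : GoodFun n) : Fin n := g.2.choose_spec.choose

lemma gUV_spec (g : GoodFun n) : gU g ≠ gV g ∧ g.1 (gU g) = gV g ∧ g.1 (gV g) = gU g ∧
    ∀ x, Reaches g.1 x (gU g) := g.2.choose_spec.choose_spec

/-- conjugation of a function by a permutation -/
def conjF (σ : Equiv.Perm (Fin n)) (g : Fin n → Fin n) : Fin n → Fin n :=
  fun m => σ (g (σ.symm m))

lemma conjF_iterate (σ : Equiv.Perm (Fin n)) (g : Fin n → Fin n) (k : ℕ) (x : Fin n) :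
    (conjF σ g)^[k] x = σ (g^[k] (σ.symm x)) := by
  induction k generalizing x with
  | zero => simp
  | succ k ih =>
    rw [Function.iterate_succ_apply, ih]
    simp only [conjF, Equiv.symm_apply_apply, Function.iterate_succ_apply]

lemma conjF_good (σ : Equiv.Perm (Fin n)) {g : Fin n → Fin n} (hg : IsGood g) :
    IsGood (conjF σ g) := by
  obtain ⟨u, v, huv, hgu, hgv, hreach⟩ := hg
  refine ⟨σ u, σ v, fun h => huv (σ.injective h), ?_, ?_, ?_⟩
  · simp [conjF, hgu]
  · simp [conjF, hgv]
  · intro x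
    obtain ⟨k, hk⟩ := hreach (σ.symm x)
    exact ⟨k, by rw [conjF_iterate, hk]⟩

noncomputable def conjG (σ : Equiv.Perm (Fin n)) (g : GoodFun n) : GoodFun n :=
  ⟨conjF σ g.1, conjF_good σ g.2⟩

/-- distance to `gU` -/
noncomputable def distu (g : GoodFun n) (x : Fin n) : ℕ :=
  Nat.find ((gUV_spec g).2.2.2 x)

lemma distu_spec (g : GoodFun n) (x : Fin n) : g.1^[distu g x] x = gU g :=
  Nat.find_spec ((gUV_spec g).2.2.2 x)

lemma distu_le (g : GoodFun n) (x : Fin n) {k : ℕ} (h : g.1^[k] x = gU g) : distu g x ≤ k :=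
  Nat.find_le h

lemma distu_gU (g : GoodFun n) : distu g (gU g) = 0 :=
  Nat.le_zero.mp (distu_le g _ (by simp))

lemma distu_succ (g : GoodFun n) (x : Fin n) (hx : x ≠ gU g) :
    distu g x = distu g (g.1 x) + 1 := by
  have h0 : distu g x ≠ 0 := by
    intro h
    have := distu_spec g x
    rw [h] at this
    exact hx (by simpa using this)
  obtain ⟨k, hk⟩ : ∃ k, distu g x = k + 1 := ⟨distu g x - 1, by omega⟩
  have h1 : g.1^[k] (g.1 x) = gU g := by
    have := distu_spec g x
    rwa [hk, Function.iterate_succ_apply] at this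
  have h2 : distu g (g.1 x) ≤ k := distu_le g _ h1
  have h3 : distu g x ≤ distu g (g.1 x) + 1 := by
    apply distu_le
    rw [Function.iterate_succ_apply]
    exact distu_spec g (g.1 x)
  omega

lemma distu_parity (g : GoodFun n) (x : Fin n) :
    Even (distu g x) ↔ ¬ Even (distu g (g.1 x)) := by
  by_cases hx : x = gU g
  · subst hx
    rw [distu_gU, (gUV_spec g).2.1]
    have hvu : gV g ≠ gU g := Ne.symm (gUV_spec g).1
    rw [distu_succ g (gV g) hvu, (gUV_spec g).2.2.1, distu_gU]
    simp
  · rw [distu_succ g x hx]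
    simp [Nat.even_add_one]


variable {d : ℕ}

/-- arcs of the pedigree built from a tuple of good functions -/
def pedA (t : Fin d → GoodFun n) :
    Fin (d + 1) × Fin n → Fin (d + 1) × Fin n → Prop := fun p q =>
  ∃ hq : (q.1 : ℕ) < d, (p.1 : ℕ) = (q.1 : ℕ) + 1 ∧
    (p.2 = q.2 ∨ p.2 = (t ⟨q.1, hq⟩).1 q.2)

lemma pedA_iff (t : Fin d → GoodFun n) {b : ℕ} (hb : b < d) (hb1 : b + 1 < d + 1)
    (m j : Fin n) :
    pedA t (⟨b + 1, hb1⟩, m) (⟨b, by omega⟩, j) ↔ (m = j ∨ m = (t ⟨b, hb⟩).1 j) := by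
  constructor
  · rintro ⟨hq, -, hor⟩
    exact hor
  · intro hor
    exact ⟨hb, rfl, hor⟩

/-- membership coloring set -/
def pedM (t : Fin d → GoodFun n) : Set (Fin (d + 1) × Fin n) :=
  {p | ∀ h : 1 ≤ (p.1 : ℕ), Even (distu (t ⟨(p.1 : ℕ) - 1, by have := p.1.isLt; omega⟩) p.2)}

lemma mem_pedM (t : Fin d → GoodFun n) (p : Fin (d + 1) × Fin n) (h1 : 1 ≤ (p.1 : ℕ))
    (hlt : (p.1 : ℕ) - 1 < d) :
    p ∈ pedM t ↔ Even (distu (t ⟨(p.1 : ℕ) - 1, hlt⟩) p.2) :=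
  ⟨fun H => H h1, fun H _ => H⟩

noncomputable def ped (t : Fin d → GoodFun n) : SimplePedigree n d where
  A := pedA t
  arc_level := by rintro p q ⟨hq, h1, -⟩; exact h1
  parents := by
    classical
    refine ⟨pedM t, (pedM t)ᶜ, disjoint_compl_right, Set.union_compl_self _, ?_⟩
    intro x hx
    set g : GoodFun n := t ⟨(x.1 : ℕ), hx⟩ with hgdef
    set ℓ : Fin (d + 1) := ⟨(x.1 : ℕ) + 1, by omega⟩ with hℓdef
    set a : Fin (d + 1) × Fin n := (ℓ, x.2) with hadef
    set b : Fin (d + 1) × Fin n := (ℓ, g.1 x.2) with hbdef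
    have hl1 : 1 ≤ (ℓ : ℕ) := by simp [hℓdef]
    have hlt : (ℓ : ℕ) - 1 < d := by simp [hℓdef]; omega
    have hidx : (⟨(ℓ : ℕ) - 1, hlt⟩ : Fin d) = ⟨(x.1 : ℕ), hx⟩ := by
      apply Fin.ext; simp [hℓdef]
    have hmema : a ∈ pedM t ↔ Even (distu g x.2) := by
      rw [mem_pedM t a hl1 hlt]
      simp only [hadef]
      rw [hidx, ← hgdef]
    have hmemb : b ∈ pedM t ↔ Even (distu g (g.1 x.2)) := by
      rw [mem_pedM t b hl1 hlt]
      simp only [hbdef]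
      rw [hidx, ← hgdef]
    have hAa : pedA t a x := ⟨hx, rfl, Or.inl rfl⟩
    have hAb : pedA t b x := ⟨hx, rfl, Or.inr rfl⟩
    have huniq : ∀ w, pedA t w x → w = a ∨ w = b := by
      rintro ⟨w1, w2⟩ ⟨hq, hlev, hor⟩
      have hw1 : w1 = ℓ := by apply Fin.ext; simpa [hℓdef] using hlev
      rcases hor with h | h
      · left; rw [hadef, hw1]; exact Prod.ext rfl h
      · right; rw [hbdef, hw1]; exact Prod.ext rfl h
    have hpar := distu_parity g x.2
    by_cases hc : Even (distu g x.2)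
    · exact ⟨a, b, hmema.mpr hc, fun hmem => (hpar.mp hc) (hmemb.mp hmem), hAa, hAb, huniq⟩
    · refine ⟨b, a, ?_, fun hmem => hc (hmema.mp hmem), hAb, hAa, fun w hw => (huniq w hw).symm⟩
      rw [hmemb]
      by_contra h
      exact hc (hpar.mpr h)


----------------------------------------------------------------
-- Chains upward and level preservation

def ChainUp (P : SimplePedigree n d) : ℕ → (Fin (d + 1) × Fin n) → Prop
  | 0, _ => True
  | (k + 1), x => ∃ y, P.A y x ∧ ChainUp P k y

lemma chainUp_le (P : SimplePedigree n d) :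
    ∀ (k : ℕ) (x), ChainUp P k x → (x.1 : ℕ) + k ≤ d := by
  intro k
  induction k with
  | zero => intro x _; have := x.1.isLt; omega
  | succ k ih =>
    rintro x ⟨y, hA, hc⟩
    have h1 := P.arc_level y x hA
    have h2 := ih y hc
    omega

lemma chainUp_of_le (P : SimplePedigree n d) :
    ∀ (k : ℕ) (x), (x.1 : ℕ) + k ≤ d → ChainUp P k x := by
  intro k
  induction k with
  | zero => intro x _; trivial
  | succ k ih =>
    intro x hx
    obtain ⟨M, F, -, -, hpar⟩ := P.parents
    obtain ⟨u, -, -, -, hAu, -, -⟩ := hpar x (by omega)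
    refine ⟨u, hAu, ih u ?_⟩
    have := P.arc_level u x hAu
    omega

lemma iso_chainUp {P Q : SimplePedigree n d}
    (φ : (Fin (d + 1) × Fin n) ≃ (Fin (d + 1) × Fin n))
    (hφ : ∀ u v, P.A u v ↔ Q.A (φ u) (φ v)) :
    ∀ (k : ℕ) (x), ChainUp P k x → ChainUp Q k (φ x) := by
  intro k
  induction k with
  | zero => intro x _; trivial
  | succ k ih =>
    rintro x ⟨y, hA, hc⟩
    exact ⟨φ y, (hφ y x).1 hA, ih y hc⟩

lemma iso_symm_arcs {P Q : SimplePedigree n d}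
    (φ : (Fin (d + 1) × Fin n) ≃ (Fin (d + 1) × Fin n))
    (hφ : ∀ u v, P.A u v ↔ Q.A (φ u) (φ v)) :
    ∀ u v, Q.A u v ↔ P.A (φ.symm u) (φ.symm v) := by
  intro u v
  rw [hφ (φ.symm u) (φ.symm v), Equiv.apply_symm_apply, Equiv.apply_symm_apply]

lemma iso_level {P Q : SimplePedigree n d}
    (φ : (Fin (d + 1) × Fin n) ≃ (Fin (d + 1) × Fin n))
    (hφ : ∀ u v, P.A u v ↔ Q.A (φ u) (φ v)) :
    ∀ x, ((φ x).1 : ℕ) = (x.1 : ℕ) := by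
  have h1 : ∀ x, ((φ x).1 : ℕ) ≤ (x.1 : ℕ) := by
    intro x
    have hx := x.1.isLt
    have hc := chainUp_of_le P (d - (x.1 : ℕ)) x (by omega)
    have := chainUp_le Q _ _ (iso_chainUp φ hφ _ x hc)
    omega
  have h2 : ∀ x, ((φ.symm x).1 : ℕ) ≤ (x.1 : ℕ) := by
    intro x
    have hx := x.1.isLt
    have hc := chainUp_of_le Q (d - (x.1 : ℕ)) x (by omega)
    have := chainUp_le P _ _ (iso_chainUp φ.symm (iso_symm_arcs φ hφ) _ x hc)
    omega
  intro x
  have := h2 (φ x)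
  rw [Equiv.symm_apply_apply] at this
  exact le_antisymm (h1 x) this

/-- the permutation induced on generation `i` by an isomorphism -/
noncomputable def isoPerm {P Q : SimplePedigree n d}
    (φ : (Fin (d + 1) × Fin n) ≃ (Fin (d + 1) × Fin n))
    (hφ : ∀ u v, P.A u v ↔ Q.A (φ u) (φ v)) (i : Fin (d + 1)) : Equiv.Perm (Fin n) where
  toFun := fun j => (φ (i, j)).2
  invFun := fun j => (φ.symm (i, j)).2
  left_inv := by
    intro j
    show (φ.symm (i, (φ (i, j)).2)).2 = j
    have h1 : φ (i, j) = (i, (φ (i, j)).2) := by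
      refine Prod.ext (Fin.ext ?_) rfl
      exact iso_level φ hφ (i, j)
    rw [← h1, Equiv.symm_apply_apply]
  right_inv := by
    intro j
    show (φ (i, (φ.symm (i, j)).2)).2 = j
    have h2 : φ.symm (i, j) = (i, (φ.symm (i, j)).2) := by
      refine Prod.ext (Fin.ext ?_) rfl
      exact iso_level φ.symm (iso_symm_arcs φ hφ) (i, j)
    rw [← h2, Equiv.apply_symm_apply]

lemma isoPerm_apply {P Q : SimplePedigree n d}
    (φ : (Fin (d + 1) × Fin n) ≃ (Fin (d + 1) × Fin n))
    (hφ : ∀ u v, P.A u v ↔ Q.A (φ u) (φ v)) (i : Fin (d + 1)) (j : Fin n) :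
    φ (i, j) = (i, isoPerm φ hφ i j) := by
  refine Prod.ext (Fin.ext ?_) rfl
  exact iso_level φ hφ (i, j)



----------------------------------------------------------------
-- the transport chain

noncomputable def chainP (s : Fin d → GoodFun n) (bits : Fin d → Bool) : ℕ → Equiv.Perm (Fin n)
  | 0 => 1
  | (b + 1) =>
    if hb : b < d then
      (if bits ⟨b, hb⟩ then
        Equiv.swap (gU (conjG (chainP s bits b) (s ⟨b, hb⟩)))
            (gV (conjG (chainP s bits b) (s ⟨b, hb⟩))) * chainP s bits b
       else chainP s bits b)
    else chainP s bits b

noncomputable def recovF (s : Fin d → GoodFun n) (bits : Fin d → Bool) (b : Fin d) :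
    Fin n → Fin n :=
  if bits b then
    twistF (gU (conjG (chainP s bits (b : ℕ)) (s b))) (gV (conjG (chainP s bits (b : ℕ)) (s b)))
      (conjG (chainP s bits (b : ℕ)) (s b)).1
  else (conjG (chainP s bits (b : ℕ)) (s b)).1


lemma fiber (s t : Fin d → GoodFun n) (h : PedigreeIso (ped s) (ped t)) :
    ∃ bits : Fin d → Bool, ∀ b : Fin d, (t b).1 = recovF s bits b := by
  classical
  obtain ⟨φ, hφ, hfix⟩ := h
  set σφ : Fin (d + 1) → Equiv.Perm (Fin n) := isoPerm φ hφ with hσφ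
  have hσ0 : σφ 0 = 1 := by
    apply Equiv.ext
    intro j
    show (φ ((0 : Fin (d + 1)), j)).2 = j
    rw [hfix j]
  set bits : Fin d → Bool := fun b => decide (σφ b.succ ≠ σφ b.castSucc) with hbits
  -- the key step
  have step : ∀ (b : ℕ) (hb : b < d),
      σφ ⟨b, by omega⟩ = chainP s bits b →
      σφ ⟨b + 1, by omega⟩ = chainP s bits (b + 1) ∧
      (t ⟨b, hb⟩).1 = recovF s bits ⟨b, hb⟩ := by
    intro b hb hσ
    set σ : Equiv.Perm (Fin n) := chainP s bits b with hσdef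
    set σ' : Equiv.Perm (Fin n) := σφ ⟨b + 1, by omega⟩ with hσ'def
    set g : GoodFun n := s ⟨b, hb⟩ with hgdef
    set ghat : GoodFun n := conjG σ g with hghatdef
    -- transported arc condition
    have H : ∀ m j, (m = j ∨ m = g.1 j) ↔
        (σ' m = σ j ∨ σ' m = (t ⟨b, hb⟩).1 (σ j)) := by
      intro m j
      have harc := hφ (⟨b + 1, by omega⟩, m) (⟨b, by omega⟩, j)
      rw [isoPerm_apply φ hφ, isoPerm_apply φ hφ] at harc
      have e1 : (ped s).A (⟨b + 1, by omega⟩, m) (⟨b, by omega⟩, j) ↔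
          (m = j ∨ m = g.1 j) := pedA_iff s hb (by omega) m j
      have e2 : (ped t).A (⟨b + 1, by omega⟩, isoPerm φ hφ ⟨b + 1, by omega⟩ m)
          (⟨b, by omega⟩, isoPerm φ hφ ⟨b, by omega⟩ j) ↔
          (isoPerm φ hφ ⟨b + 1, by omega⟩ m = isoPerm φ hφ ⟨b, by omega⟩ j ∨
           isoPerm φ hφ ⟨b + 1, by omega⟩ m =
             (t ⟨b, hb⟩).1 (isoPerm φ hφ ⟨b, by omega⟩ j)) :=
        pedA_iff t hb (by omega) _ _
      rw [e1, e2] at harc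
      have hq1 : isoPerm φ hφ ⟨b + 1, by omega⟩ m = σ' m := rfl
      have hq2 : isoPerm φ hφ ⟨b, by omega⟩ j = σ j := by
        show σφ ⟨b, by omega⟩ j = σ j
        rw [hσ]
      rw [hq1, hq2] at harc
      exact harc
    -- base form for rigidity
    have H0 : ∀ m j, (m = j ∨ m = ghat.1 j) →
        ((σ' * σ⁻¹) m = j ∨ (σ' * σ⁻¹) m = (t ⟨b, hb⟩).1 j) := by
      intro m j hm
      have hlhs : σ.symm m = σ.symm j ∨ σ.symm m = g.1 (σ.symm j) := by
        rcases hm with hm | hm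
        · left; rw [hm]
        · right
          rw [hm]
          show σ.symm (σ (g.1 (σ.symm j))) = g.1 (σ.symm j)
          rw [Equiv.symm_apply_apply]
      have := (H (σ.symm m) (σ.symm j)).1 hlhs
      rw [Equiv.apply_symm_apply] at this
      simpa [Equiv.Perm.mul_apply] using this
    have hspec := gUV_spec ghat
    have hR := rigid hspec.1 hspec.2.1 hspec.2.2.1 hspec.2.2.2 (σ' * σ⁻¹) H0
    have hsucc : (⟨b, hb⟩ : Fin d).succ = (⟨b + 1, by omega⟩ : Fin (d + 1)) := rfl
    have hcast : (⟨b, hb⟩ : Fin d).castSucc = (⟨b, by omega⟩ : Fin (d + 1)) := rfl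
    rcases hR with ⟨hρ, hg'⟩ | ⟨hρ, hg'⟩
    · -- no twist
      have hσ'σ : σ' = σ := by
        have : σ' * σ⁻¹ = 1 := by rw [hρ]; rfl
        exact mul_inv_eq_one.mp this
      have hbval : bits ⟨b, hb⟩ = false := by
        rw [hbits]
        show decide (σφ (⟨b, hb⟩ : Fin d).succ ≠ σφ (⟨b, hb⟩ : Fin d).castSucc) = false
        apply decide_eq_false
        intro hne
        exact hne (hσ'σ.trans hσ.symm)
      constructor
      · show σ' = chainP s bits (b + 1)
        rw [chainP]
        rw [dif_pos hb, hbval]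
        rw [if_neg Bool.false_ne_true]
        exact hσ'σ
      · show (t ⟨b, hb⟩).1 = recovF s bits ⟨b, hb⟩
        rw [hg', recovF, hbval]
        rw [if_neg Bool.false_ne_true]
    · -- twist
      have hσ'σ : σ' = Equiv.swap (gU ghat) (gV ghat) * σ := by
        have h1 : σ' * σ⁻¹ * σ = Equiv.swap (gU ghat) (gV ghat) * σ := by rw [hρ]
        rwa [inv_mul_cancel_right] at h1
      have hneq : σ' ≠ σ := by
        intro heq
        have h2 : Equiv.swap (gU ghat) (gV ghat) * σ = σ := by rw [← hσ'σ, heq]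
        have h3 : Equiv.swap (gU ghat) (gV ghat) = 1 := mul_right_cancel (h2.trans (one_mul σ).symm)
        have h4 := congrArg (fun e => e.toFun (gU ghat)) h3
        simp only [Equiv.toFun_as_coe, Equiv.swap_apply_left, Equiv.Perm.coe_one, id_eq] at h4
        exact hspec.1 h4.symm
      have hbval : bits ⟨b, hb⟩ = true := by
        rw [hbits]
        show decide (σφ (⟨b, hb⟩ : Fin d).succ ≠ σφ (⟨b, hb⟩ : Fin d).castSucc) = true
        apply decide_eq_true
        intro heq
        exact hneq (heq.trans hσ)
      constructor
      · show σ' = chainP s bits (b + 1)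
        rw [chainP]
        rw [dif_pos hb, hbval]
        rw [if_pos rfl]
        exact hσ'σ
      · show (t ⟨b, hb⟩).1 = recovF s bits ⟨b, hb⟩
        rw [hg', recovF, hbval]
        rw [if_pos rfl]
  have main : ∀ (b : ℕ) (hb : b ≤ d), σφ ⟨b, by omega⟩ = chainP s bits b := by
    intro b
    induction b with
    | zero => intro _; exact hσ0
    | succ b ih =>
      intro hb
      exact (step b (by omega) (ih (by omega))).1
  refine ⟨bits, ?_⟩
  intro b
  have := (step (b : ℕ) b.isLt (main (b : ℕ) (le_of_lt b.isLt))).2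
  simpa using this


----------------------------------------------------------------
section Encode

/-- the auxiliary vertex `w`. -/
def wOf (hn : 3 ≤ n) (u v : Fin n) : Fin n :=
  (({u, v} : Finset (Fin n))ᶜ).min' (by
    rw [← Finset.card_pos, Finset.card_compl, Fintype.card_fin]
    have h2 : ({u, v} : Finset (Fin n)).card ≤ 2 :=
      le_trans (Finset.card_insert_le _ _) (by simp)
    omega)

lemma wOf_ne (hn : 3 ≤ n) (u v : Fin n) : wOf hn u v ≠ u ∧ wOf hn u v ≠ v := by
  have := Finset.min'_mem (({u, v} : Finset (Fin n))ᶜ) (by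
    rw [← Finset.card_pos, Finset.card_compl, Fintype.card_fin]
    have h2 : ({u, v} : Finset (Fin n)).card ≤ 2 :=
      le_trans (Finset.card_insert_le _ _) (by simp)
    omega)
  rw [Finset.mem_compl, Finset.mem_insert, Finset.mem_singleton] at this
  push_neg at this
  exact this

lemma wOf_swap (hn : 3 ≤ n) (u v : Fin n) : wOf hn v u = wOf hn u v := by
  have hpair : ({v, u} : Finset (Fin n))ᶜ = ({u, v} : Finset (Fin n))ᶜ := by
    rw [Finset.pair_comm]
  unfold wOf
  congr 1

/-- the domain of the free part. -/
def DOf (hn : 3 ≤ n) (u v : Fin n) : Finset (Fin n) :=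
  ({u, v, wOf hn u v} : Finset (Fin n))ᶜ

lemma mem_DOf {hn : 3 ≤ n} {u v m : Fin n} :
    m ∈ DOf hn u v ↔ (m ≠ u ∧ m ≠ v ∧ m ≠ wOf hn u v) := by
  simp [DOf, not_or]

lemma card_DOf (hn : 3 ≤ n) {u v : Fin n} (huv : u ≠ v) : (DOf hn u v).card = n - 3 := by
  rw [DOf, Finset.card_compl, Fintype.card_fin]
  have h3 : ({u, v, wOf hn u v} : Finset (Fin n)).card = 3 := by
    rw [Finset.card_insert_of_notMem, Finset.card_insert_of_notMem, Finset.card_singleton]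
    · simp only [Finset.mem_singleton]
      exact fun hc => (wOf_ne hn u v).2 hc.symm
    · simp only [Finset.mem_insert, Finset.mem_singleton]
      push_neg
      exact ⟨huv, fun hc => (wOf_ne hn u v).1 hc.symm⟩
  rw [h3]

/-- order iso enumerating the free domain. -/
noncomputable def eOf (hn : 3 ≤ n) {u v : Fin n} (huv : u ≠ v) :
    Fin (n - 3) ≃o {x // x ∈ DOf hn u v} :=
  (DOf hn u v).orderIsoOfFin (card_DOf hn huv)

/-- the total extension of the free function. -/
noncomputable def hhOf (hn : 3 ≤ n) {u v : Fin n} (huv : u ≠ v) (h : Fin (n - 3) → Fin n) :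
    Fin n → Fin n :=
  fun m => if hm : m ∈ DOf hn u v then h ((eOf hn huv).symm ⟨m, hm⟩) else m

lemma hhOf_not_mem {hn : 3 ≤ n} {u v : Fin n} {huv : u ≠ v} {h : Fin (n - 3) → Fin n}
    {m : Fin n} (hm : m ∉ DOf hn u v) : hhOf hn huv h m = m := dif_neg hm

lemma hhOf_e {hn : 3 ≤ n} {u v : Fin n} {huv : u ≠ v} {h : Fin (n - 3) → Fin n}
    (i : Fin (n - 3)) : hhOf hn huv h ((eOf hn huv i : {x // x ∈ DOf hn u v}) : Fin n) = h i := by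
  have hm : ((eOf hn huv i : {x // x ∈ DOf hn u v}) : Fin n) ∈ DOf hn u v := (eOf hn huv i).2
  simp only [hhOf]
  rw [dif_pos hm]
  congr 1
  have h1 : (⟨((eOf hn huv i : {x // x ∈ DOf hn u v}) : Fin n), hm⟩ :
      {x // x ∈ DOf hn u v}) = eOf hn huv i := Subtype.ext rfl
  rw [h1]
  exact OrderIso.symm_apply_apply _ _

/-- the periodic part of `hh` inside the free domain. -/
noncomputable def ZOf (hn : 3 ≤ n) {u v : Fin n} (huv : u ≠ v) (h : Fin (n - 3) → Fin n) :
    Finset (Fin n) :=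
  @Finset.filter _ (fun m => ∃ p ∈ Finset.Icc 1 n, (hhOf hn huv h)^[p] m = m)
    (Classical.decPred _) (DOf hn u v)

lemma mem_ZOf {hn : 3 ≤ n} {u v : Fin n} {huv : u ≠ v} {h : Fin (n - 3) → Fin n} {m : Fin n} :
    m ∈ ZOf hn huv h ↔ m ∈ DOf hn u v ∧
      ∃ p, (1 ≤ p ∧ p ≤ n) ∧ (hhOf hn huv h)^[p] m = m := by
  rw [ZOf, @Finset.mem_filter _ _ (Classical.decPred _) _ _]
  simp only [Finset.mem_Icc]

lemma ZOf_maps {hn : 3 ≤ n} {u v : Fin n} {huv : u ≠ v} {h : Fin (n - 3) → Fin n} {m : Fin n}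
    (hm : m ∈ ZOf hn huv h) : hhOf hn huv h m ∈ ZOf hn huv h := by
  set hh := hhOf hn huv h with hhh
  rw [mem_ZOf] at hm ⊢
  obtain ⟨hmD, p, hp, hper⟩ := hm
  have hper2 : hh^[p] (hh m) = hh m := by
    rw [← Function.iterate_succ_apply, Function.iterate_succ_apply', hper]
  refine ⟨?_, p, hp, hper2⟩
  by_contra hnot
  have hfix : hh (hh m) = hh m := hhOf_not_mem hnot
  have hfix2 : ∀ k, hh^[k] (hh m) = hh m := fun k => Function.iterate_fixed hfix k
  have hm_eq : m = hh m := by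
    have h1 : hh^[p] m = hh^[p - 1] (hh m) := by
      rw [← Function.iterate_succ_apply]
      congr 1
      omega
    rw [h1, hfix2] at hper
    exact hper.symm
  rw [← hm_eq] at hnot
  exact hnot hmD

lemma ZOf_inj {hn : 3 ≤ n} {u v : Fin n} {huv : u ≠ v} {h : Fin (n - 3) → Fin n}
    {m1 m2 : Fin n} (hm1 : m1 ∈ ZOf hn huv h) (hm2 : m2 ∈ ZOf hn huv h)
    (he : hhOf hn huv h m1 = hhOf hn huv h m2) : m1 = m2 := by
  set hh := hhOf hn huv h with hhh
  rw [mem_ZOf] at hm1 hm2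
  obtain ⟨-, p1, hp1, hper1⟩ := hm1
  obtain ⟨-, p2, hp2, hper2⟩ := hm2
  have hP1 : hh^[p1 * p2] m1 = m1 := by
    rw [Function.iterate_mul]
    exact Function.iterate_fixed hper1 p2
  have hP2 : hh^[p1 * p2] m2 = m2 := by
    rw [mul_comm, Function.iterate_mul]
    exact Function.iterate_fixed hper2 p1
  have hp : 1 ≤ p1 * p2 := Nat.mul_pos hp1.1 hp2.1
  calc m1 = hh^[p1 * p2] m1 := hP1.symm
    _ = hh^[p1 * p2 - 1] (hh m1) := by rw [← Function.iterate_succ_apply]; congr 1; omega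
    _ = hh^[p1 * p2 - 1] (hh m2) := by rw [he]
    _ = hh^[p1 * p2] m2 := by rw [← Function.iterate_succ_apply]; congr 1; omega
    _ = m2 := hP2

noncomputable def zsOf (hn : 3 ≤ n) {u v : Fin n} (huv : u ≠ v) (h : Fin (n - 3) → Fin n) :
    List (Fin n) := (ZOf hn huv h).sort (· ≤ ·)

noncomputable def LOf (hn : 3 ≤ n) {u v : Fin n} (huv : u ≠ v) (h : Fin (n - 3) → Fin n) :
    List (Fin n) := (zsOf hn huv h).map (hhOf hn huv h)

lemma zsOf_mem {hn : 3 ≤ n} {u v : Fin n} {huv : u ≠ v} {h : Fin (n - 3) → Fin n} {a : Fin n} :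
    a ∈ zsOf hn huv h ↔ a ∈ ZOf hn huv h := Finset.mem_sort _

lemma LOf_sub {hn : 3 ≤ n} {u v : Fin n} {huv : u ≠ v} {h : Fin (n - 3) → Fin n} {a : Fin n}
    (ha : a ∈ LOf hn huv h) : a ∈ ZOf hn huv h := by
  rw [LOf, List.mem_map] at ha
  obtain ⟨z, hz, rfl⟩ := ha
  exact ZOf_maps (zsOf_mem.mp hz)

lemma LOf_nodup {hn : 3 ≤ n} {u v : Fin n} {huv : u ≠ v} {h : Fin (n - 3) → Fin n} :
    (LOf hn huv h).Nodup := by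
  apply List.Nodup.map_on _ (Finset.sort_nodup _ _)
  intro x hx y hy hxy
  exact ZOf_inj (zsOf_mem.mp hx) (zsOf_mem.mp hy) hxy

lemma LOf_length {hn : 3 ≤ n} {u v : Fin n} {huv : u ≠ v} {h : Fin (n - 3) → Fin n} :
    (LOf hn huv h).length = (ZOf hn huv h).card := by
  rw [LOf, List.length_map, zsOf, Finset.length_sort]

lemma LOf_toFinset {hn : 3 ≤ n} {u v : Fin n} {huv : u ≠ v} {h : Fin (n - 3) → Fin n} :
    (LOf hn huv h).toFinset = ZOf hn huv h := by
  apply Finset.eq_of_subset_of_card_le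
  · intro a ha
    exact LOf_sub (List.mem_toFinset.mp ha)
  · rw [List.toFinset_card_of_nodup LOf_nodup, LOf_length]

lemma mem_LOf {hn : 3 ≤ n} {u v : Fin n} {huv : u ≠ v} {h : Fin (n - 3) → Fin n} {a : Fin n} :
    a ∈ LOf hn huv h ↔ a ∈ ZOf hn huv h := by
  rw [← LOf_toFinset, List.mem_toFinset]

/-- the encoded function. -/
noncomputable def encF (hn : 3 ≤ n) {u v : Fin n} (huv : u ≠ v) (h : Fin (n - 3) → Fin n) :
    Fin n → Fin n := fun m =>
  if m = u then v
  else if m = v then u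
  else if m = wOf hn u v then (LOf hn huv h).getD 0 u
  else if m ∈ LOf hn huv h then (LOf hn huv h).getD ((LOf hn huv h).idxOf m + 1) u
  else hhOf hn huv h m

section encFlemmas

variable {hn : 3 ≤ n} {u v : Fin n} {huv : u ≠ v} {h : Fin (n - 3) → Fin n}

lemma encF_u : encF hn huv h u = v := by rw [encF, if_pos rfl]

lemma encF_v : encF hn huv h v = u := by
  rw [encF, if_neg (Ne.symm huv), if_pos rfl]

lemma encF_w : encF hn huv h (wOf hn u v) = (LOf hn huv h).getD 0 u := by
  rw [encF, if_neg (wOf_ne hn u v).1, if_neg (wOf_ne hn u v).2, if_pos rfl]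

lemma encF_mem {m : Fin n} (hm : m ∈ LOf hn huv h) :
    encF hn huv h m = (LOf hn huv h).getD ((LOf hn huv h).idxOf m + 1) u := by
  have hmD := mem_DOf.mp (mem_ZOf.mp (LOf_sub hm)).1
  rw [encF, if_neg hmD.1, if_neg hmD.2.1, if_neg hmD.2.2, if_pos hm]

lemma encF_other {m : Fin n} (h1 : m ≠ u) (h2 : m ≠ v) (h3 : m ≠ wOf hn u v)
    (h4 : m ∉ LOf hn huv h) : encF hn huv h m = hhOf hn huv h m := by
  rw [encF, if_neg h1, if_neg h2, if_neg h3, if_neg h4]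

lemma encF_iter_w : ∀ i ≤ (LOf hn huv h).length,
    (encF hn huv h)^[i + 1] (wOf hn u v) = (LOf hn huv h).getD i u := by
  intro i
  induction i with
  | zero => intro _; rw [Function.iterate_one, encF_w]
  | succ i ih =>
    intro hle
    have hi : i < (LOf hn huv h).length := by omega
    rw [Function.iterate_succ_apply', ih (by omega), List.getD_eq_getElem _ u hi]
    rw [encF_mem (List.getElem_mem hi), List.Nodup.idxOf_getElem LOf_nodup i hi]

lemma encF_terminal :
    (encF hn huv h)^[(LOf hn huv h).length + 1] (wOf hn u v) = u := by
  have := encF_iter_w (hn := hn) (huv := huv) (h := h) (LOf hn huv h).length le_rfl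
  rwa [List.getD_eq_default _ u le_rfl] at this

lemma encF_reach_L {i : ℕ} (hi : i < (LOf hn huv h).length) :
    Reaches (encF hn huv h) ((LOf hn huv h)[i]) u := by
  refine ⟨(LOf hn huv h).length - i, ?_⟩
  have h1 : (encF hn huv h)^[i + 1] (wOf hn u v) = (LOf hn huv h)[i] := by
    rw [encF_iter_w i (le_of_lt hi), List.getD_eq_getElem _ u hi]
  rw [← h1, ← Function.iterate_add_apply]
  have h2 : (LOf hn huv h).length - i + (i + 1) = (LOf hn huv h).length + 1 := by omega
  rw [h2]
  exact encF_terminal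

/-- the stable set -/
noncomputable def SSOf (hn : 3 ≤ n) {u v : Fin n} (huv : u ≠ v) (h : Fin (n - 3) → Fin n) :
    Finset (Fin n) := insert u (insert v (insert (wOf hn u v) (ZOf hn huv h)))

lemma reach_SS {m : Fin n} (hm : m ∈ SSOf hn huv h) : Reaches (encF hn huv h) m u := by
  rw [SSOf, Finset.mem_insert, Finset.mem_insert, Finset.mem_insert] at hm
  rcases hm with rfl | rfl | rfl | hm
  · exact ⟨0, rfl⟩
  · exact ⟨1, by rw [Function.iterate_one, encF_v]⟩
  · exact ⟨(LOf hn huv h).length + 1, encF_terminal⟩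
  · rw [← mem_LOf, List.mem_iff_getElem] at hm
    obtain ⟨i, hi, rfl⟩ := hm
    exact encF_reach_L hi

lemma encF_eq_hh {m : Fin n} (hm : m ∉ SSOf hn huv h) :
    encF hn huv h m = hhOf hn huv h m := by
  rw [SSOf, Finset.mem_insert, Finset.mem_insert, Finset.mem_insert] at hm
  push_neg at hm
  exact encF_other hm.1 hm.2.1 hm.2.2.1 (fun hc => hm.2.2.2 (LOf_sub hc))

lemma encF_walk : ∀ (k : ℕ) (m : Fin n), (hhOf hn huv h)^[k] m ∈ SSOf hn huv h →
    Reaches (encF hn huv h) m u := by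
  intro k
  induction k with
  | zero => intro m hm; exact reach_SS hm
  | succ k ih =>
    intro m hm
    by_cases hms : m ∈ SSOf hn huv h
    · exact reach_SS hms
    · rw [Function.iterate_succ_apply] at hm
      obtain ⟨k', hk'⟩ := ih _ hm
      exact ⟨k' + 1, by rw [Function.iterate_succ_apply, encF_eq_hh hms]; exact hk'⟩

lemma encF_hit (m : Fin n) : ∃ k, (hhOf hn huv h)^[k] m ∈ SSOf hn huv h := by
  set hh := hhOf hn huv h with hhh
  obtain ⟨i, j, hne, heq⟩ := Fintype.exists_ne_map_eq_of_card_lt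
    (fun k : Fin (n + 1) => hh^[(k : ℕ)] m) (by simp)
  have key : ∀ (a b : Fin (n + 1)), (a : ℕ) < (b : ℕ) →
      hh^[(a : ℕ)] m = hh^[(b : ℕ)] m → ∃ k, hh^[k] m ∈ SSOf hn huv h := by
    intro a b hab he
    refine ⟨(a : ℕ), ?_⟩
    set p := hh^[(a : ℕ)] m with hp
    have hper : hh^[(b : ℕ) - (a : ℕ)] p = p := by
      rw [hp, ← Function.iterate_add_apply]
      have : (b : ℕ) - (a : ℕ) + (a : ℕ) = (b : ℕ) := by omega
      rw [this, ← he]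
    by_cases hD : p ∈ DOf hn u v
    · have hZ : p ∈ ZOf hn huv h := by
        rw [mem_ZOf]
        refine ⟨hD, (b : ℕ) - (a : ℕ), ⟨by omega, by have := b.isLt; omega⟩, hper⟩
      rw [SSOf]
      simp [hZ]
    · rw [mem_DOf] at hD
      push_neg at hD
      rw [SSOf]
      by_cases h1 : p = u
      · simp [h1]
      · by_cases h2 : p = v
        · simp [h2]
        · simp [hD h1 h2]
  rcases Ne.lt_or_gt hne with hlt | hlt
  · exact key i j hlt heq
  · exact key j i hlt heq.symm

lemma encF_reach (x : Fin n) : Reaches (encF hn huv h) x u := by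
  obtain ⟨k, hk⟩ := encF_hit (huv := huv) (h := h) x
  exact encF_walk k x hk

lemma encF_good : IsGood (encF hn huv h) :=
  ⟨u, v, huv, encF_u, encF_v, fun x => encF_reach x⟩

end encFlemmas


----------------------------------------------------------------
-- injectivity of the encoding

lemma spine_ne {hn : 3 ≤ n} {u v : Fin n} {huv : u ≠ v} {h : Fin (n - 3) → Fin n} :
    ∀ k ≤ (LOf hn huv h).length,
      (encF hn huv h)^[k] (wOf hn u v) ≠ u ∧ (encF hn huv h)^[k] (wOf hn u v) ≠ v := by
  intro k hk
  cases k with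
  | zero => exact wOf_ne hn u v
  | succ i =>
    have hi : i < (LOf hn huv h).length := by omega
    rw [encF_iter_w i (le_of_lt hi), List.getD_eq_getElem _ u hi]
    have hmem : (LOf hn huv h)[i] ∈ LOf hn huv h := List.getElem_mem hi
    have hD := mem_DOf.mp (mem_ZOf.mp (LOf_sub hmem)).1
    exact ⟨hD.1, hD.2.1⟩

lemma encF_inj {hn : 3 ≤ n} {u v u' v' : Fin n} {huv : u ≠ v} {huv' : u' ≠ v'}
    {h h' : Fin (n - 3) → Fin n}
    (he : encF hn huv h = encF hn huv' h') : u = u' ∧ v = v' ∧ h = h' := by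
  set G := encF hn huv h with hG
  have hGu : G u = v := encF_u
  have hGv : G v = u := encF_v
  have hGu' : G u' = v' := by rw [he]; exact encF_u
  have hGv' : G v' = u' := by rw [he]; exact encF_v
  have hreach : ∀ x, Reaches G x u := fun x => encF_reach x
  have hu'uv : u' = u ∨ u' = v := by
    apply periodic_mem hGu hGv hreach u' 2 (by omega)
    have h2 : G^[2] u' = G (G u') := by
      rw [Function.iterate_succ_apply', Function.iterate_one]
    rw [h2, hGu', hGv']
  have hv'uv : v' = u ∨ v' = v := by
    apply periodic_mem hGu hGv hreach v' 2 (by omega)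
    have h2 : G^[2] v' = G (G v') := by
      rw [Function.iterate_succ_apply', Function.iterate_one]
    rw [h2, hGv', hGu']
  have hcases : (u' = u ∧ v' = v) ∨ (u' = v ∧ v' = u) := by
    rcases hu'uv with h1 | h1
    · left
      refine ⟨h1, ?_⟩
      rcases hv'uv with h2 | h2
      · exact absurd (h1.trans h2.symm) huv'
      · exact h2
    · right
      refine ⟨h1, ?_⟩
      rcases hv'uv with h2 | h2
      · exact h2
      · exact absurd (h1.trans h2.symm) huv'
  -- rule out the swapped case
  rcases hcases with ⟨hu1, hv1⟩ | ⟨hu1, hv1⟩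
  swap
  · exfalso
    have hw' : wOf hn u' v' = wOf hn u v := by rw [hu1, hv1]; exact wOf_swap hn u v
    set w := wOf hn u v with hwdef
    set len := (LOf hn huv h).length with hlen
    set len' := (LOf hn huv' h').length with hlen'
    have hB1 : G^[len + 1] w = u := encF_terminal
    have hB2 : G^[len' + 1] w = v := by
      have t := encF_terminal (hn := hn) (huv := huv') (h := h')
      rw [hw', ← he] at t
      exact t.trans hu1
    have hA1 : ∀ k ≤ len, G^[k] w ≠ u ∧ G^[k] w ≠ v := fun k hk => spine_ne k hk
    have hA2 : ∀ k ≤ len', G^[k] w ≠ v ∧ G^[k] w ≠ u := by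
      intro k hk
      have t := spine_ne (hn := hn) (huv := huv') (h := h') k hk
      rw [hw', ← he] at t
      exact ⟨fun hc => t.1 (hc.trans hu1.symm), fun hc => t.2 (hc.trans hv1.symm)⟩
    have hle1 : ¬ (len + 1 ≤ len') := fun hc => (hA2 (len + 1) hc).2 hB1
    have hle2 : ¬ (len' + 1 ≤ len) := fun hc => (hA1 (len' + 1) hc).2 hB2
    have hll : len = len' := by omega
    rw [hll] at hB1
    exact huv (hB1.symm.trans hB2)
  · -- aligned case
    have hu2 := hu1.symm
    subst hu2
    have hv2 := hv1.symm
    subst hv2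
    refine ⟨rfl, rfl, ?_⟩
    set w := wOf hn u v with hwdef
    set len := (LOf hn huv h).length with hlen
    set len' := (LOf hn huv' h').length with hlen'
    have hB1 : G^[len + 1] w = u := encF_terminal
    have hB2 : G^[len' + 1] w = u := by rw [he]; exact encF_terminal
    have hA1 : ∀ k ≤ len, G^[k] w ≠ u ∧ G^[k] w ≠ v := fun k hk => spine_ne k hk
    have hA2 : ∀ k ≤ len', G^[k] w ≠ u ∧ G^[k] w ≠ v := by
      intro k hk
      have t := spine_ne (hn := hn) (huv := huv') (h := h') k hk
      rwa [← he] at t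
    have hlenlen : len = len' := by
      have hle1 : ¬ (len + 1 ≤ len') := fun hc => (hA2 (len + 1) hc).1 hB1
      have hle2 : ¬ (len' + 1 ≤ len) := fun hc => (hA1 (len' + 1) hc).1 hB2
      omega
    have hLL : LOf hn huv h = LOf hn huv' h' := by
      apply List.ext_getElem (by rw [← hlen, ← hlen', hlenlen])
      intro i h1 h2
      have e1 : (LOf hn huv h)[i] = G^[i + 1] w := by
        rw [encF_iter_w i (by omega), List.getD_eq_getElem _ u (by omega)]
      have e2 : (LOf hn huv' h')[i] = G^[i + 1] w := by
        rw [he, encF_iter_w i (by omega), List.getD_eq_getElem _ u (by omega)]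
      rw [e1, e2]
    have hZZ : ZOf hn huv h = ZOf hn huv' h' := by
      rw [← LOf_toFinset, ← LOf_toFinset, hLL]
    have hzs : zsOf hn huv h = zsOf hn huv' h' := by rw [zsOf, zsOf, hZZ]
    have hhhD : ∀ m ∈ DOf hn u v, hhOf hn huv h m = hhOf hn huv' h' m := by
      intro m hmD
      by_cases hmZ : m ∈ ZOf hn huv h
      · have hmzs : m ∈ zsOf hn huv h := zsOf_mem.mpr hmZ
        rw [List.mem_iff_getElem] at hmzs
        obtain ⟨i, hi, hzi⟩ := hmzs
        have hiL : i < (LOf hn huv h).length := by rw [LOf, List.length_map]; exact hi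
        have l1 : (LOf hn huv h)[i]'hiL = hhOf hn huv h m := by
          simp only [LOf, List.getElem_map, hzi]
        have hi' : i < (zsOf hn huv' h').length := by rw [← hzs]; exact hi
        have hiL' : i < (LOf hn huv' h').length := by rw [LOf, List.length_map]; exact hi'
        have hzi' : (zsOf hn huv' h')[i]'hi' = m := by
          rw [← hzi]
          congr 1
          exact hzs.symm
        have l2 : (LOf hn huv' h')[i]'hiL' = hhOf hn huv' h' m := by
          simp only [LOf, List.getElem_map, hzi']
        rw [← l1, ← l2]
        exact List.getElem_of_eq hLL hiL
      · have hm1 : m ∉ LOf hn huv h := fun hc => hmZ (mem_LOf.mp hc)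
        have hmZ' : m ∉ ZOf hn huv' h' := by rw [← hZZ]; exact hmZ
        have hm2 : m ∉ LOf hn huv' h' := fun hc => hmZ' (mem_LOf.mp hc)
        have hD := mem_DOf.mp hmD
        have o1 : G m = hhOf hn huv h m := encF_other hD.1 hD.2.1 hD.2.2 hm1
        have o2 : G m = hhOf hn huv' h' m := by rw [he]; exact encF_other hD.1 hD.2.1 hD.2.2 hm2
        rw [← o1, o2]
    funext i
    have q1 : h i = hhOf hn huv h ((eOf hn huv i : {x // x ∈ DOf hn u v}) : Fin n) :=
      (hhOf_e i).symm
    have q2 : h' i = hhOf hn huv' h' ((eOf hn huv' i : {x // x ∈ DOf hn u v}) : Fin n) :=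
      (hhOf_e i).symm
    have hee : ((eOf hn huv' i : {x // x ∈ DOf hn u v}) : Fin n) =
        ((eOf hn huv i : {x // x ∈ DOf hn u v}) : Fin n) := rfl
    rw [q1, q2, hee]
    exact hhhD _ (eOf hn huv i).2

end Encode

def Param (n : ℕ) : Type := ({q : Fin n × Fin n // q.1 ≠ q.2} × (Fin (n - 3) → Fin n))

noncomputable def encode (hn : 3 ≤ n) : Param n → GoodFun n :=
  fun p => ⟨encF hn p.1.2 p.2, encF_good (hn := hn) (huv := p.1.2) (h := p.2)⟩

lemma encode_inj (hn : 3 ≤ n) : Function.Injective (encode hn) := by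
  rintro ⟨⟨⟨u, v⟩, huv⟩, h⟩ ⟨⟨⟨u', v'⟩, huv'⟩, h'⟩ heq
  have hG : encF hn huv h = encF hn huv' h' := congrArg Subtype.val heq
  obtain ⟨h1, h2, h3⟩ := encF_inj hG
  subst h1; subst h2; subst h3
  rfl

instance : Fintype (Param n) := by unfold Param; infer_instance

lemma card_param (hn : 3 ≤ n) : Nat.card (Param n) = (n - 1) * n ^ (n - 2) := by
  have hdiag : Fintype.card {q : Fin n × Fin n // q.1 = q.2} = n := by
    have e : {q : Fin n × Fin n // q.1 = q.2} ≃ Fin n :=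
      { toFun := fun x => x.1.1
        invFun := fun a => ⟨(a, a), rfl⟩
        left_inv := fun x => Subtype.ext (Prod.ext rfl x.2)
        right_inv := fun a => rfl }
    rw [Fintype.card_congr e, Fintype.card_fin]
  have hne : Fintype.card {q : Fin n × Fin n // q.1 ≠ q.2} = n * n - n := by
    have := Fintype.card_subtype_compl (fun q : Fin n × Fin n => q.1 = q.2)
    rw [hdiag] at this
    simpa [Fintype.card_prod, Fintype.card_fin] using this
  have hfun : Fintype.card (Fin (n - 3) → Fin n) = n ^ (n - 3) := by
    rw [Fintype.card_fun, Fintype.card_fin, Fintype.card_fin]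
  rw [Nat.card_eq_fintype_card]
  show Fintype.card ({q : Fin n × Fin n // q.1 ≠ q.2} × (Fin (n - 3) → Fin n)) = _
  rw [Fintype.card_prod, hne, hfun]
  have h1 : n - 2 = (n - 3) + 1 := by omega
  rw [h1, pow_succ]
  rw [Nat.sub_mul, Nat.sub_one_mul]
  congr 1 <;> ring

lemma pediso_equiv : Equivalence (@PedigreeIso n d) := by
  constructor
  · intro P
    exact ⟨Equiv.refl _, fun u v => Iff.rfl, fun j => rfl⟩
  · rintro P Q ⟨φ, hφ, hfix⟩
    refine ⟨φ.symm, iso_symm_arcs φ hφ, fun j => ?_⟩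
    exact (Equiv.symm_apply_eq φ).mpr (hfix j).symm
  · rintro P Q R ⟨φ₁, h1, f1⟩ ⟨φ₂, h2, f2⟩
    refine ⟨φ₁.trans φ₂, fun u v => (h1 u v).trans (h2 _ _), fun j => ?_⟩
    simp only [Equiv.trans_apply, f1 j, f2 j]

instance : Finite (SimplePedigree n d) := by
  have : Finite ((Fin (d + 1) × Fin n) → (Fin (d + 1) × Fin n) → Prop) := by infer_instance
  apply Finite.of_injective (fun P : SimplePedigree n d => P.A)
  intro P Q h
  cases P; cases Q
  simpa using h

instance {α : Sort*} [Finite α] (r : α → α → Prop) : Finite (Quot r) :=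
  Finite.of_surjective (Quot.mk r) (fun q => Quot.inductionOn q (fun a => ⟨a, rfl⟩))

theorem main3 (hn : 3 ≤ n) (d : ℕ) :
    (n - 1) ^ d * n ^ (d * (n - 2)) ≤ 2 ^ d * Nat.card (Quot (@PedigreeIso n d)) := by
  classical
  set R : (Fin d → GoodFun n) → (Fin d → GoodFun n) → Prop :=
    fun a b => PedigreeIso (ped a) (ped b) with hR
  have hReqv : Equivalence R :=
    ⟨fun a => pediso_equiv.refl _, fun h => pediso_equiv.symm h,
     fun h1 h2 => pediso_equiv.trans h1 h2⟩
  -- κ : Quot R → Quot PedigreeIso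
  set κ : Quot R → Quot (@PedigreeIso n d) := Quot.map ped (fun a b hab => hab) with hκ
  have hκinj : Function.Injective κ := by
    intro q1 q2
    induction q1 using Quot.ind with | _ a =>
    induction q2 using Quot.ind with | _ b =>
    intro hab
    have : Quot.mk _ (ped a) = Quot.mk _ (ped b) := hab
    rw [Quot.eq] at this
    have h2 : PedigreeIso (ped a) (ped b) := by
      rwa [pediso_equiv.eqvGen_eq] at this
    exact Quot.sound h2
  -- T : parameters → good tuples
  set T : (Fin d → Param n) → (Fin d → GoodFun n) := fun par b => encode hn (par b) with hT
  have hTinj : Function.Injective T := by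
    intro a b hab
    funext i
    exact encode_inj hn (congrFun hab i)
  -- J : parameters → Quot R × bits
  have hrep : ∀ par : Fin d → Param n,
      PedigreeIso (ped (Quot.out (Quot.mk R (T par)))) (ped (T par)) := by
    intro par
    have h1 : Quot.mk R (Quot.out (Quot.mk R (T par))) = Quot.mk R (T par) := Quot.out_eq _
    rw [Quot.eq] at h1
    rwa [hReqv.eqvGen_eq] at h1
  set J : (Fin d → Param n) → (Quot R × (Fin d → Bool)) := fun par =>
    (Quot.mk R (T par), Classical.choose (fiber _ _ (hrep par))) with hJ
  have hJinj : Function.Injective J := by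
    intro p1 p2 h12
    have hq : Quot.mk R (T p1) = Quot.mk R (T p2) := congrArg Prod.fst h12
    have hout : Quot.out (Quot.mk R (T p1)) = Quot.out (Quot.mk R (T p2)) :=
      congrArg Quot.out hq
    have hbits := congrArg Prod.snd h12
    simp only [hJ] at hbits
    have hs1 := Classical.choose_spec (fiber _ _ (hrep p1))
    have hs2 := Classical.choose_spec (fiber _ _ (hrep p2))
    apply hTinj
    funext b
    apply Subtype.ext
    rw [hs1 b, hs2 b, hbits, hout]
  -- cardinalities
  have hcard1 : Nat.card (Fin d → Param n) ≤ Nat.card (Quot R × (Fin d → Bool)) :=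
    Nat.card_le_card_of_injective J hJinj
  have hcard2 : Nat.card (Quot R × (Fin d → Bool)) = Nat.card (Quot R) * 2 ^ d := by
    rw [Nat.card_prod]
    congr 1
    rw [Nat.card_eq_fintype_card, Fintype.card_fun, Fintype.card_bool, Fintype.card_fin]
  have hcard3 : Nat.card (Quot R) ≤ Nat.card (Quot (@PedigreeIso n d)) :=
    Nat.card_le_card_of_injective κ hκinj
  have hcard4 : Nat.card (Fin d → Param n) = ((n - 1) * n ^ (n - 2)) ^ d := by
    rw [Nat.card_eq_fintype_card, Fintype.card_fun, Fintype.card_fin,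
      ← Nat.card_eq_fintype_card, card_param hn]
  have harith : (n - 1) ^ d * n ^ (d * (n - 2)) = ((n - 1) * n ^ (n - 2)) ^ d := by
    rw [mul_pow, mul_comm d (n - 2), pow_mul]
  calc (n - 1) ^ d * n ^ (d * (n - 2)) = ((n - 1) * n ^ (n - 2)) ^ d := harith
    _ = Nat.card (Fin d → Param n) := hcard4.symm
    _ ≤ Nat.card (Quot R) * 2 ^ d := by rw [← hcard2]; exact hcard1
    _ ≤ Nat.card (Quot (@PedigreeIso n d)) * 2 ^ d := by
        exact Nat.mul_le_mul_right _ hcard3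
    _ = 2 ^ d * Nat.card (Quot (@PedigreeIso n d)) := by ring

def swapGood : GoodFun 2 :=
  ⟨fun j => j + 1, 0, 1, by decide, by decide, by decide,
    fun x => by
      fin_cases x
      · exact ⟨0, rfl⟩
      · exact ⟨1, by decide⟩⟩

theorem main2 (d : ℕ) :
    1 ≤ 2 ^ d * Nat.card (Quot (@PedigreeIso 2 d)) := by
  have hne : Nonempty (SimplePedigree 2 d) := ⟨ped (fun _ => swapGood)⟩
  have hq : Nonempty (Quot (@PedigreeIso 2 d)) := ⟨Quot.mk _ hne.some⟩
  have hpos : 0 < Nat.card (Quot (@PedigreeIso 2 d)) := Nat.card_pos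
  have h2 : 0 < 2 ^ d := Nat.pow_pos (by omega)
  exact Nat.one_le_iff_ne_zero.mpr (by positivity)


end PedAux

theorem f_n_d_lower_bound (n d : ℕ) (hn : 2 ≤ n) (hd : 1 ≤ d) :
    (n - 1) ^ d * n ^ (d * (n - 2)) ≤ 2 ^ d * Nat.card (Quot (@PedigreeIso n d)) := by
  by_cases hn3 : 3 ≤ n
  · exact PedAux.main3 hn3 d
  · have hn2 : n = 2 := by omega
    subst hn2
    simpa using PedAux.main2 d
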